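/- Let (Ω, F, ℙ) be a probability space equipped with a filtration (F_k)_{k∈ℕ}, and let (S_k)_{k∈ℕ} be a nonnegative, integrable, adapted real-valued stochastic process such that for every k ∈ ℕ, 𝔼[S_{k+1} | F_k] ≤ S_k + ψ almost surely, where ψ ≥ 0 is a constant. Then for every time horizon T ∈ ℕ and every λ > 0, ℙ{ max_{0 ≤ k ≤ T} S_k ≥ λ } ≤ (𝔼[S_0] + ψ·T) / λ. -/

import Mathlib

open MeasureTheory

/-- The c-martingale maximal inequality: if `(S k)` is a nonnegative, integrable, adapted
process with `𝔼[S (k+1) | ℱ k] ≤ S k + ψ` a.s. for a constant `ψ ≥ 0`, then for every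
time horizon `T` and every `λ > 0`,
`ℙ{ max_{0 ≤ k ≤ T} S k ≥ λ } ≤ (𝔼[S 0] + ψ * T) / λ`. -/
theorem cMartingale_maximal_inequality
    {Ω : Type*} {m0 : MeasurableSpace Ω} {μ : Measure Ω} [IsProbabilityMeasure μ]
    (ℱ : Filtration ℕ m0) (S : ℕ → Ω → ℝ) (ψ : ℝ) (hψ : 0 ≤ ψ)
    (hadapted : Adapted ℱ S)
    (hnonneg : ∀ k, 0 ≤ᵐ[μ] S k)
    (hint : ∀ k, Integrable (S k) μ)
    (hdrift : ∀ k, μ[S (k + 1) | ℱ k] ≤ᵐ[μ] fun ω => S k ω + ψ)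
    (T : ℕ) (lam : ℝ) (hlam : 0 < lam) :
    μ {ω | ∃ k ≤ T, lam ≤ S k ω} ≤
      ENNReal.ofReal (((∫ ω, S 0 ω ∂μ) + ψ * T) / lam) := by
  classical
  set g : ℕ → Ω → ℝ := fun k ω => S k ω + ψ * ((T : ℝ) - k) with hg
  have hg_adapted : Adapted ℱ g := fun k => (hadapted k).add measurable_const
  have hg_int : ∀ k, Integrable (g k) μ := fun k => (hint k).add (integrable_const _)
  have hg_super : Supermartingale g ℱ μ := by
    refine supermartingale_nat hg_adapted.stronglyAdapted hg_int fun k => ?_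
    have h1 : μ[g (k + 1) | ℱ k] =ᵐ[μ]
        fun ω => (μ[S (k + 1) | ℱ k]) ω + ψ * ((T : ℝ) - (k + 1 : ℕ)) := by
      have h2 := condExp_add (μ := μ) (m := ℱ k) (hint (k + 1))
        (integrable_const (ψ * ((T : ℝ) - (k + 1 : ℕ))))
      refine h2.trans ?_
      have h3 := condExp_const (μ := μ) (ℱ.le k) (ψ * ((T : ℝ) - (k + 1 : ℕ)))
      rw [h3]
      rfl
    filter_upwards [h1, hdrift k] with ω h1ω h2ω
    have : (μ[S (k + 1) | ℱ k]) ω ≤ S k ω + ψ := h2ω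
    rw [h1ω]
    have hcast : ((k + 1 : ℕ) : ℝ) = (k : ℝ) + 1 := by push_cast; ring
    simp only [hg, hcast]
    nlinarith
  set τ : Ω → WithTop ℕ := fun ω => ((hittingBtwn S (Set.Ici lam) 0 T ω : ℕ) : WithTop ℕ) with hτdef
  have hτ : IsStoppingTime ℱ τ := hadapted.isStoppingTime_hittingBtwn measurableSet_Ici
  have hτ_le : ∀ ω, τ ω ≤ T := fun ω => WithTop.coe_le_coe.2 (hittingBtwn_le ω)
  have hsub : Submartingale (fun k => -g k) ℱ μ := by
    have := hg_super.neg
    exact this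
  -- optional stopping
  have hos := hsub.expected_stoppedValue_mono (isStoppingTime_const ℱ 0) hτ
    (fun ω => WithTop.coe_le_coe.2 (Nat.zero_le _)) hτ_le
  have hsv_int : Integrable (stoppedValue g τ) μ := by
    have h := hsub.integrable_stoppedValue hτ hτ_le
    have e2 : stoppedValue g τ = fun ω => -(stoppedValue (fun k => -g k) τ ω) := by
      funext ω; simp [stoppedValue]
    rw [e2]
    exact h.neg
  have hOS : ∫ ω, stoppedValue g τ ω ∂μ ≤ ∫ ω, g 0 ω ∂μ := by
    have e1 : stoppedValue (fun k => -g k) (fun _ => (WithTop.some 0 : WithTop ℕ)) = fun ω => -(g 0 ω) := rfl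
    have e2 : stoppedValue (fun k => -g k) τ = fun ω => -(stoppedValue g τ ω) := rfl
    rw [e1, e2, integral_neg, integral_neg] at hos
    linarith
  set A : Set Ω := {ω | ∃ k ≤ T, lam ≤ S k ω} with hA
  have hA_meas : MeasurableSet A := by
    have : A = ⋃ k ∈ Finset.range (T + 1), {ω | lam ≤ S k ω} := by
      ext ω
      simp [hA, Nat.lt_succ_iff]
    rw [this]
    refine MeasurableSet.biUnion (Finset.range (T + 1)).countable_toSet fun k _ => ?_
    exact measurableSet_le measurable_const ((hadapted k).mono (ℱ.le k) le_rfl)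
  have hA_sv : ∀ ω ∈ A, lam ≤ stoppedValue g τ ω := by
    intro ω hω
    obtain ⟨k, hk, hSk⟩ := hω
    have hmem : stoppedValue S τ ω ∈ Set.Ici lam :=
      stoppedValue_hittingBtwn_mem ⟨k, ⟨Nat.zero_le _, hk⟩, hSk⟩
    have h1 : lam ≤ S (τ ω).untopA ω := hmem
    have h2 : (0 : ℝ) ≤ ψ * ((T : ℝ) - ((τ ω).untopA : ℝ)) := by
      have : ((τ ω).untopA : ℝ) ≤ (T : ℝ) := Nat.cast_le.2 (hittingBtwn_le ω)
      nlinarith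
    show lam ≤ S (τ ω).untopA ω + ψ * ((T : ℝ) - ((τ ω).untopA : ℕ))
    linarith
  have hsv_nonneg : 0 ≤ᵐ[μ] stoppedValue g τ := by
    have hae : ∀ᵐ ω ∂μ, ∀ k, 0 ≤ S k ω := ae_all_iff.2 hnonneg
    filter_upwards [hae] with ω hω
    have h2 : (0 : ℝ) ≤ ψ * ((T : ℝ) - ((τ ω).untopA : ℝ)) := by
      have : ((τ ω).untopA : ℝ) ≤ (T : ℝ) := Nat.cast_le.2 (hittingBtwn_le ω)
      nlinarith
    have := hω (τ ω).untopA
    show (0:ℝ) ≤ S (τ ω).untopA ω + ψ * ((T : ℝ) - ((τ ω).untopA : ℕ))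
    linarith
  have key : lam * (μ A).toReal ≤ (∫ ω, S 0 ω ∂μ) + ψ * T := by
    have h1 : lam * (μ A).toReal ≤ ∫ ω in A, stoppedValue g τ ω ∂μ :=
      by have := setIntegral_ge_of_const_le hA_meas (measure_ne_top μ A) hA_sv hsv_int.integrableOn
         rw [smul_eq_mul, mul_comm] at this; exact this
    have h2 : ∫ ω in A, stoppedValue g τ ω ∂μ ≤ ∫ ω, stoppedValue g τ ω ∂μ :=
      setIntegral_le_integral hsv_int hsv_nonneg
    have h3 : ∫ ω, g 0 ω ∂μ = (∫ ω, S 0 ω ∂μ) + ψ * T := by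
      rw [hg]
      rw [integral_add (hint 0) (integrable_const _), integral_const]
      simp
    linarith
  have htoReal : (μ A).toReal ≤ ((∫ ω, S 0 ω ∂μ) + ψ * T) / lam := by
    rw [le_div_iff₀ hlam]
    linarith [key]
  calc μ A = ENNReal.ofReal (μ A).toReal := (ENNReal.ofReal_toReal (measure_ne_top μ A)).symm
    _ ≤ ENNReal.ofReal (((∫ ω, S 0 ω ∂μ) + ψ * T) / lam) := ENNReal.ofReal_le_ofReal htoReal
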